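/- Let n ≥ 4 and L > 2n be integers, and let S ⊆ Λ_L satisfy |S| = n² and meet every column of the torus (for every k ∈ ZMod L there is j ∈ ZMod L with (k,j) ∈ S). Then e(S) ≤ 2n² − L; in particular e(S) < 2n(n−1), so no configuration wrapping around the torus achieves the minimal energy. -/

import Mathlib

open scoped Classical

noncomputable section

/-- A site of the discrete torus `Λ_L`. -/
abbrev Site (L : ℕ) := ZMod L × ZMod L

/-- Two sites of the discrete torus are adjacent if their difference is a unit vector. -/
def torusAdj (L : ℕ) (u v : Site L) : Prop :=
  u - v = (1, 0) ∨ u - v = (-1, 0) ∨ u - v = (0, 1) ∨ u - v = (0, -1)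

/-- `e(S)`: the number of unordered pairs of adjacent sites contained in `S`. -/
def torusE (L : ℕ) (S : Finset (Site L)) : ℕ :=
  ((S ×ˢ S).filter fun p => torusAdj L p.1 p.2).card / 2

/-- A subset of `ZMod L` closed under subtracting 1 is empty or everything. -/
lemma aux_closed_univ {L : ℕ} [NeZero L] {T : Finset (ZMod L)} (hne : T.Nonempty)
    (h : ∀ x ∈ T, x - 1 ∈ T) : T = Finset.univ := by
  obtain ⟨a, ha⟩ := hne
  have key : ∀ m : ℕ, a - (m : ZMod L) ∈ T := by
    intro m
    induction m with
    | zero => simpa using ha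
    | succ k ih =>
        have := h _ ih
        have heq : a - ((k : ZMod L) + 1) = a - (k : ZMod L) - 1 := by ring
        rw [Nat.cast_succ, heq]
        exact this
  apply Finset.eq_univ_iff_forall.mpr
  intro y
  have hy : y = a - (((a - y).val : ℕ) : ZMod L) := by
    rw [ZMod.natCast_val, ZMod.cast_id]; ring
  rw [hy]
  exact key _

lemma aux_row_bound {L : ℕ} [NeZero L] {T : Finset (ZMod L)} (hne : T.Nonempty) :
    (T.filter (fun x => x - 1 ∈ T)).card + 1 ≤ T.card + (if T = Finset.univ then 1 else 0) := by
  by_cases hfull : T = Finset.univ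
  · simp only [hfull, if_pos rfl]
    exact Nat.add_le_add_right (Finset.card_filter_le _ _) 1
  · simp only [hfull, if_neg, if_false, Nat.add_zero]
    have hx : ∃ x ∈ T, ¬ (x - 1 ∈ T) := by
      by_contra hcon
      push_neg at hcon
      exact hfull (aux_closed_univ hne hcon)
    exact Finset.card_lt_card (Finset.filter_ssubset.mpr hx)

/-- Decompose the cardinality of a set of sites as the sum of its row cardinalities. -/
lemma aux_rowdecomp {L : ℕ} [NeZero L] (A : Finset (Site L)) (T : ZMod L → Finset (ZMod L))
    (h : ∀ u : Site L, u ∈ A ↔ u.1 ∈ T u.2) :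
    A.card = ∑ j : ZMod L, (T j).card := by
  rw [Finset.card_eq_sum_card_fiberwise (f := Prod.snd) (t := Finset.univ)
    (fun x _ => Finset.mem_univ _)]
  refine Finset.sum_congr rfl fun j _ => ?_
  refine Finset.card_nbij' Prod.fst (fun k => (k, j)) ?_ ?_ ?_ ?_
  · intro a ha
    simp only [Finset.mem_coe, Finset.mem_filter] at ha
    rw [← ha.2]
    exact (h a).mp ha.1
  · intro k hk
    exact Finset.mem_filter.mpr ⟨(h (k, j)).mpr hk, rfl⟩
  · intro a ha
    simp only [Finset.mem_coe, Finset.mem_filter] at ha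
    exact Prod.ext rfl ha.2.symm
  · intro k _
    rfl

lemma aux_hbound {L n : ℕ} [NeZero L] (W : Finset (Site L)) (hW : W.card = n ^ 2)
    (hrows : ∀ j : ZMod L, ∃ k, (k, j) ∈ W) :
    ∃ F : ℕ, F * L ≤ n ^ 2 ∧
      (W.filter (fun u => u - ((1 : ZMod L), (0 : ZMod L)) ∈ W)).card + L ≤ n ^ 2 + F ∧
      (1 ≤ F → ∃ j : ZMod L, ∀ k : ZMod L, (k, j) ∈ W) := by
  set T : ZMod L → Finset (ZMod L) := fun j => Finset.univ.filter (fun k => (k, j) ∈ W) with hT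
  set F := (Finset.univ.filter (fun j : ZMod L => T j = Finset.univ)).card with hF
  have hmemT : ∀ (k j : ZMod L), k ∈ T j ↔ (k, j) ∈ W := by
    intro k j; simp [hT]
  have hsum : ∑ j : ZMod L, (T j).card = n ^ 2 := by
    rw [← hW]
    refine (aux_rowdecomp W T ?_).symm
    intro u
    rw [hmemT]
  have hTne : ∀ j : ZMod L, (T j).Nonempty := by
    intro j
    obtain ⟨k, hk⟩ := hrows j
    exact ⟨k, (hmemT k j).mpr hk⟩
  refine ⟨F, ?_, ?_, ?_⟩
  · have h1 : ∀ j ∈ Finset.univ.filter (fun j : ZMod L => T j = Finset.univ),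
        (T j).card = L := by
      intro j hj
      rw [(Finset.mem_filter.mp hj).2]
      simp [ZMod.card]
    calc F * L = ∑ j ∈ Finset.univ.filter (fun j : ZMod L => T j = Finset.univ), (T j).card := by
            rw [Finset.sum_congr rfl h1, Finset.sum_const, smul_eq_mul]
      _ ≤ ∑ j : ZMod L, (T j).card :=
            Finset.sum_le_sum_of_subset (Finset.filter_subset _ _)
      _ = n ^ 2 := hsum
  · have hH : (W.filter (fun u => u - ((1 : ZMod L), (0 : ZMod L)) ∈ W)).card
        = ∑ j : ZMod L, ((T j).filter (fun k => k - 1 ∈ T j)).card := by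
      refine aux_rowdecomp _ (fun j => (T j).filter (fun k => k - 1 ∈ T j)) ?_
      intro u
      simp only [Finset.mem_filter, hmemT, Prod.sub_def]
      constructor
      · rintro ⟨h1, h2⟩
        refine ⟨h1, ?_⟩
        simpa using h2
      · rintro ⟨h1, h2⟩
        refine ⟨h1, ?_⟩
        simpa using h2
    have hstep : ∑ j : ZMod L, (((T j).filter (fun k => k - 1 ∈ T j)).card + 1)
        ≤ ∑ j : ZMod L, ((T j).card + (if T j = Finset.univ then 1 else 0)) :=
      Finset.sum_le_sum (fun j _ => aux_row_bound (hTne j))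
    rw [Finset.sum_add_distrib, Finset.sum_add_distrib, Finset.sum_const, Finset.sum_boole,
      hsum] at hstep
    simp only [Finset.card_univ, ZMod.card, smul_eq_mul, mul_one, Nat.cast_id] at hstep
    rw [hH]
    exact hstep
  · intro hF1
    have : (Finset.univ.filter (fun j : ZMod L => T j = Finset.univ)).Nonempty :=
      Finset.card_pos.mp hF1
    obtain ⟨j, hj⟩ := this
    refine ⟨j, fun k => ?_⟩
    rw [← hmemT]
    rw [(Finset.mem_filter.mp hj).2]
    exact Finset.mem_univ k

lemma aux_pair_card {L : ℕ} (S : Finset (Site L)) (v : Site L) :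
    ((S ×ˢ S).filter (fun p => p.1 - p.2 = v)).card = (S.filter (fun u => u - v ∈ S)).card := by
  refine Finset.card_nbij' Prod.fst (fun u => (u, u - v)) ?_ ?_ ?_ ?_
  · intro p hp
    simp only [Finset.mem_coe, Finset.mem_filter, Finset.mem_product] at hp ⊢
    obtain ⟨⟨h1, h2⟩, h3⟩ := hp
    have : p.1 - v = p.2 := by rw [← h3]; ring
    rw [this]
    exact ⟨h1, h2⟩
  · intro u hu
    simp only [Finset.mem_coe, Finset.mem_filter, Finset.mem_product] at hu ⊢
    exact ⟨⟨hu.1, hu.2⟩, by ring⟩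
  · intro p hp
    simp only [Finset.mem_coe, Finset.mem_filter, Finset.mem_product] at hp
    have : p.1 - v = p.2 := by rw [← hp.2]; ring
    exact Prod.ext rfl this
  · intro u _
    rfl

lemma aux_neg_card {L : ℕ} (S : Finset (Site L)) (v : Site L) :
    ((S ×ˢ S).filter (fun p => p.1 - p.2 = -v)).card
      = ((S ×ˢ S).filter (fun p => p.1 - p.2 = v)).card := by
  refine Finset.card_nbij' Prod.swap Prod.swap ?_ ?_ ?_ ?_
  · intro p hp
    simp only [Finset.mem_coe, Finset.mem_filter, Finset.mem_product, Prod.fst_swap, Prod.snd_swap] at hp ⊢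
    exact ⟨⟨hp.1.2, hp.1.1⟩, by rw [show p.2 - p.1 = -(p.1 - p.2) from by ring, hp.2]; ring⟩
  · intro p hp
    simp only [Finset.mem_coe, Finset.mem_filter, Finset.mem_product, Prod.fst_swap, Prod.snd_swap] at hp ⊢
    exact ⟨⟨hp.1.2, hp.1.1⟩, by rw [show p.2 - p.1 = -(p.1 - p.2) from by ring, hp.2]⟩
  · intro p _; exact Prod.swap_swap p
  · intro p _; exact Prod.swap_swap p

lemma aux_swap_card {L : ℕ} (S : Finset (Site L)) :
    (S.filter (fun u => u - ((0 : ZMod L), (1 : ZMod L)) ∈ S)).card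
      = ((S.image Prod.swap).filter
          (fun u => u - ((1 : ZMod L), (0 : ZMod L)) ∈ S.image Prod.swap)).card := by
  have himg : ∀ q : Site L, q ∈ S.image Prod.swap ↔ q.swap ∈ S := by
    intro q
    constructor
    · intro hq
      obtain ⟨a, ha, rfl⟩ := Finset.mem_image.mp hq
      rwa [Prod.swap_swap]
    · intro hq
      exact Finset.mem_image.mpr ⟨q.swap, hq, Prod.swap_swap q⟩
  have hsub : ∀ p : Site L, p.swap - ((1 : ZMod L), (0 : ZMod L))
      = (p - ((0 : ZMod L), (1 : ZMod L))).swap := by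
    intro p
    simp [Prod.ext_iff, Prod.sub_def]
  refine Finset.card_nbij' Prod.swap Prod.swap ?_ ?_ ?_ ?_
  · intro p hp
    simp only [Finset.mem_coe, Finset.mem_filter] at hp ⊢
    refine ⟨(himg p.swap).mpr (by rw [Prod.swap_swap]; exact hp.1), ?_⟩
    rw [hsub, himg, Prod.swap_swap]
    exact hp.2
  · intro p hp
    simp only [Finset.mem_coe, Finset.mem_filter] at hp ⊢
    have h1 := (himg p).mp hp.1
    refine ⟨h1, ?_⟩
    have hsub2 : p.swap - ((0 : ZMod L), (1 : ZMod L)) = (p - ((1 : ZMod L), (0 : ZMod L))).swap := by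
      simp [Prod.ext_iff, Prod.sub_def]
    rw [hsub2, ← himg]
    exact hp.2
  · intro p _; exact Prod.swap_swap p
  · intro p _; exact Prod.swap_swap p

lemma aux_split {L : ℕ} (hL9 : 3 ≤ L) (S : Finset (Site L)) :
    torusE L S = (S.filter (fun u => u - ((1 : ZMod L), (0 : ZMod L)) ∈ S)).card
        + (S.filter (fun u => u - ((0 : ZMod L), (1 : ZMod L)) ∈ S)).card := by
  haveI : NeZero L := ⟨by omega⟩
  have h2 : (2 : ZMod L) ≠ 0 := by
    intro h
    rw [show (2 : ZMod L) = ((2 : ℕ) : ZMod L) from by push_cast; ring,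
      ZMod.natCast_eq_zero_iff] at h
    have := Nat.le_of_dvd (by norm_num) h
    omega
  have h1 : (1 : ZMod L) ≠ 0 := by
    intro h
    apply h2
    linear_combination 2 * h
  have hne11 : (1 : ZMod L) ≠ -1 := by
    intro h
    apply h2
    linear_combination h
  have h01 : (0 : ZMod L) ≠ 1 := fun h => h1 h.symm
  have h0m1 : (0 : ZMod L) ≠ -1 := by
    intro h
    apply h1
    rw [show (1 : ZMod L) = -(-1) from by ring, ← h]
    ring
  have hd : ∀ (v w : Site L), v ≠ w →
      Disjoint ((S ×ˢ S).filter (fun p => p.1 - p.2 = v))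
        ((S ×ˢ S).filter (fun p => p.1 - p.2 = w)) := by
    intro v w hvw
    refine Finset.disjoint_filter.mpr ?_
    intro x _ hp hq
    exact hvw (hp ▸ hq)
  have e1 : ((S ×ˢ S).filter (fun p => torusAdj L p.1 p.2))
      = ((S ×ˢ S).filter (fun p => p.1 - p.2 = ((1 : ZMod L), (0 : ZMod L))))
        ∪ (((S ×ˢ S).filter (fun p => p.1 - p.2 = ((-1 : ZMod L), (0 : ZMod L))))
          ∪ (((S ×ˢ S).filter (fun p => p.1 - p.2 = ((0 : ZMod L), (1 : ZMod L))))
            ∪ ((S ×ˢ S).filter (fun p => p.1 - p.2 = ((0 : ZMod L), (-1 : ZMod L)))))) := by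
    ext x
    rw [Finset.mem_filter]
    simp only [Finset.mem_filter, Finset.mem_union, torusAdj]
    tauto
  have nab : ((1 : ZMod L), (0 : ZMod L)) ≠ ((-1 : ZMod L), (0 : ZMod L)) := by
    simp [Prod.ext_iff]; exact hne11
  have nac : ((1 : ZMod L), (0 : ZMod L)) ≠ ((0 : ZMod L), (1 : ZMod L)) := by
    simp [Prod.ext_iff]; intro h; exact absurd h h1
  have nad : ((1 : ZMod L), (0 : ZMod L)) ≠ ((0 : ZMod L), (-1 : ZMod L)) := by
    simp [Prod.ext_iff]; intro h; exact absurd h h1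
  have nbc : ((-1 : ZMod L), (0 : ZMod L)) ≠ ((0 : ZMod L), (1 : ZMod L)) := by
    simp [Prod.ext_iff]; intro h; exact absurd h (fun hh => h1 (by rw [show (1:ZMod L) = -(-1) from by ring, hh]; ring))
  have nbd : ((-1 : ZMod L), (0 : ZMod L)) ≠ ((0 : ZMod L), (-1 : ZMod L)) := by
    simp [Prod.ext_iff]; intro h; exact absurd h (fun hh => h1 (by rw [show (1:ZMod L) = -(-1) from by ring, hh]; ring))
  have ncd : ((0 : ZMod L), (1 : ZMod L)) ≠ ((0 : ZMod L), (-1 : ZMod L)) := by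
    simp [Prod.ext_iff]; exact hne11
  have hcard : ((S ×ˢ S).filter (fun p => torusAdj L p.1 p.2)).card
      = ((S ×ˢ S).filter (fun p => p.1 - p.2 = ((1 : ZMod L), (0 : ZMod L)))).card
        + (((S ×ˢ S).filter (fun p => p.1 - p.2 = ((-1 : ZMod L), (0 : ZMod L)))).card
          + (((S ×ˢ S).filter (fun p => p.1 - p.2 = ((0 : ZMod L), (1 : ZMod L)))).card
            + ((S ×ˢ S).filter (fun p => p.1 - p.2 = ((0 : ZMod L), (-1 : ZMod L)))).card)) := by
    rw [e1]
    rw [Finset.card_union_of_disjoint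
      (Finset.disjoint_union_right.mpr ⟨hd _ _ nab,
        Finset.disjoint_union_right.mpr ⟨hd _ _ nac, hd _ _ nad⟩⟩)]
    rw [Finset.card_union_of_disjoint
      (Finset.disjoint_union_right.mpr ⟨hd _ _ nbc, hd _ _ nbd⟩)]
    rw [Finset.card_union_of_disjoint (hd _ _ ncd)]
  have hb : ((S ×ˢ S).filter (fun p => p.1 - p.2 = ((-1 : ZMod L), (0 : ZMod L)))).card
      = ((S ×ˢ S).filter (fun p => p.1 - p.2 = ((1 : ZMod L), (0 : ZMod L)))).card := by
    rw [show ((-1 : ZMod L), (0 : ZMod L)) = -((1 : ZMod L), (0 : ZMod L)) from by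
      simp [Prod.ext_iff]]
    exact aux_neg_card S _
  have hdc : ((S ×ˢ S).filter (fun p => p.1 - p.2 = ((0 : ZMod L), (-1 : ZMod L)))).card
      = ((S ×ˢ S).filter (fun p => p.1 - p.2 = ((0 : ZMod L), (1 : ZMod L)))).card := by
    rw [show ((0 : ZMod L), (-1 : ZMod L)) = -((0 : ZMod L), (1 : ZMod L)) from by
      simp [Prod.ext_iff]]
    exact aux_neg_card S _
  rw [torusE, hcard, hb, hdc, aux_pair_card, aux_pair_card]
  have hfin : ∀ x y : ℕ, (x + (x + (y + y))) / 2 = x + y := by intro x y; omega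
  exact hfin _ _

/-- for `n ≥ 4` and `L > 2n`, a configuration of `n²` particles which
meets every column of the torus satisfies `e(S) ≤ 2n² − L`; in particular
`e(S) < 2n(n−1)`, so it does not achieve the minimal energy. -/
theorem wrapping_configuration_bound (n L : ℕ) (hn : 4 ≤ n) (hL : 2 * n < L)
    (S : Finset (Site L)) (hcard : S.card = n ^ 2)
    (hcol : ∀ k : ZMod L, ∃ j : ZMod L, (k, j) ∈ S) :
    (torusE L S : ℤ) ≤ 2 * (n : ℤ) ^ 2 - (L : ℤ) ∧ torusE L S < 2 * n * (n - 1) := by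
  haveI : NeZero L := ⟨by omega⟩
  have hsplit := aux_split (by omega) S
  have hswap := aux_swap_card S
  set S' := S.image Prod.swap with hS'
  have hS'card : S'.card = n ^ 2 := by
    rw [hS', Finset.card_image_of_injective _ Prod.swap_injective]
    exact hcard
  have hrows' : ∀ j : ZMod L, ∃ k, (k, j) ∈ S' := by
    intro j
    obtain ⟨k, hk⟩ := hcol j
    exact ⟨k, Finset.mem_image_of_mem _ hk⟩
  obtain ⟨F', hF'L, hV, hF'full⟩ := aux_hbound S' hS'card hrows'
  have key : torusE L S + L ≤ 2 * n ^ 2 := by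
    rcases Nat.eq_zero_or_pos F' with hF0 | hF1
    · have hH : (S.filter (fun u => u - ((1 : ZMod L), (0 : ZMod L)) ∈ S)).card ≤ n ^ 2 := by
        rw [← hcard]; exact Finset.card_filter_le _ _
      omega
    · obtain ⟨j, hj⟩ := hF'full hF1
      have hrowsS : ∀ i : ZMod L, ∃ k, (k, i) ∈ S := by
        intro i
        refine ⟨j, ?_⟩
        obtain ⟨a, ha, hae⟩ := Finset.mem_image.mp (hj i)
        have : a = (j, i) := by
          have h := congrArg Prod.swap hae
          rwa [Prod.swap_swap] at h
        rwa [this] at ha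
      obtain ⟨F, hFL, hH, -⟩ := aux_hbound S hcard hrowsS
      have hsmall : F + F' < n := by
        have h1 : (F + F') * L ≤ 2 * n ^ 2 := by rw [add_mul]; omega
        have h2 : 2 * n ^ 2 < n * L := by nlinarith
        have h3 : (F + F') * L < n * L := lt_of_le_of_lt h1 h2
        exact Nat.lt_of_mul_lt_mul_right h3
      omega
  constructor
  · have hcast : (torusE L S : ℤ) + (L : ℤ) ≤ 2 * ((n : ℤ)) ^ 2 := by exact_mod_cast key
    linarith
  · have hnn : 2 * n * (n - 1) + 2 * n = 2 * n ^ 2 := by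
      obtain ⟨m, rfl⟩ : ∃ m, n = m + 1 := ⟨n - 1, by omega⟩
      simp only [Nat.add_sub_cancel]
      ring
    omega
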